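/- Let ℓ be a prime and m, n ∈ ℕ ∪ {∞} with n ≤ m. Let K be a field with μ_{ℓ^m} ⊂ K and v a valuation of K. Then the map σ ↦ σ_n restricts to surjections D_v^m → D_v^n and I_v^m → I_v^n; i.e., every element of D_v^n (resp. I_v^n) admits an m-lift lying in D_v^m (resp. I_v^m). -/

import Mathlib

open Polynomial

noncomputable section

/-- The coefficient ring `Λ_m`: `ℤ/ℓ^m` for finite `m`, and `ℤ_ℓ` for `m = ∞`. -/
def Lam (ℓ : ℕ) [Fact ℓ.Prime] : ℕ∞ → Type
  | ⊤ => PadicInt ℓ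
  | (m : ℕ) => ZMod (ℓ ^ m)

instance (ℓ : ℕ) [Fact ℓ.Prime] : (m : ℕ∞) → CommRing (Lam ℓ m)
  | ⊤ => inferInstanceAs (CommRing (PadicInt ℓ))
  | (m : ℕ) => inferInstanceAs (CommRing (ZMod (ℓ ^ m)))

/-- The canonical projection `Λ_m → Λ_n` (for `n ≤ m`; junk value `0` otherwise). -/
def LamProj (ℓ : ℕ) [Fact ℓ.Prime] : (m n : ℕ∞) → Lam ℓ m →+ Lam ℓ n
  | ⊤, ⊤ => AddMonoidHom.id _
  | ⊤, (n : ℕ) => (PadicInt.toZModPow n).toAddMonoidHom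
  | (m : ℕ), (n : ℕ) =>
      if h : ℓ ^ n ∣ ℓ ^ m then (ZMod.castHom h (ZMod (ℓ ^ n))).toAddMonoidHom else 0
  | (_ : ℕ), ⊤ => 0

/-- The `ℓ^m`-minimized Galois group `𝔤^m(K) = Hom(Kˣ, Λ_m)`. -/
abbrev gal (ℓ : ℕ) [Fact ℓ.Prime] (m : ℕ∞) (K : Type*) [Field K] : Type _ :=
  Additive Kˣ →+ Lam ℓ m

variable {ℓ : ℕ} [Fact ℓ.Prime] {K : Type*} [Field K]

open scoped Classical

/-- Evaluation of `σ ∈ 𝔤^m(K)` at a unit of `K`. -/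
def galu {m : ℕ∞} (σ : gal ℓ m K) (x : Kˣ) : Lam ℓ m :=
  σ (Additive.ofMul x)

/-- Evaluation of `σ ∈ 𝔤^m(K)` at an arbitrary element of `K` (junk value `0` at `0`). -/
def galApp {m : ℕ∞} (σ : gal ℓ m K) (x : K) : Lam ℓ m :=
  if hx : x ≠ 0 then galu σ (Units.mk0 x hx) else 0

/-- Scalar multiplication of `𝔤^m(K)` by `Λ_m`. -/
def galSmul {m : ℕ∞} (a : Lam ℓ m) (σ : gal ℓ m K) : gal ℓ m K :=
  AddMonoidHom.mk' (fun x => a * σ x) (by intro x y; simp only [map_add, mul_add])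

/-- The canonical map `𝔤^m(K) → 𝔤^n(K)`, `σ ↦ σ_n`. -/
def galProj (m n : ℕ∞) (σ : gal ℓ m K) : gal ℓ n K :=
  (LamProj ℓ m n).comp σ

/-- `(σ,τ)` is a C-pair: `σ(x)·τ(1−x) = σ(1−x)·τ(x)` for all `x ∈ K ∖ {0,1}`. -/
def IsCPair {m : ℕ∞} (σ τ : gal ℓ m K) : Prop :=
  ∀ x : K, x ≠ 0 → x ≠ 1 →
    galApp σ x * galApp τ (1 - x) = galApp σ (1 - x) * galApp τ x

/-- A subset of `𝔤^m(K)` is a C-set if all pairs of its elements are C-pairs. -/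
def IsCSet {m : ℕ∞} (S : Set (gal ℓ m K)) : Prop :=
  ∀ σ ∈ S, ∀ τ ∈ S, IsCPair σ τ

/-- `μ_{c·ℓ^m} ⊂ K`: the polynomial `X^{c·ℓ^m} − 1` splits completely in `K`
(for all finite exponents when `m = ∞`). -/
def MuIn (K : Type*) [Field K] (c ℓ : ℕ) : ℕ∞ → Prop
  | ⊤ => ∀ k : ℕ, Polynomial.Splits (Polynomial.X ^ (c * ℓ ^ k) - 1 : K[X])
  | (N : ℕ) => Polynomial.Splits (Polynomial.X ^ (c * ℓ ^ N) - 1 : K[X])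

/-- `M_r(n) = (r+1)·n − r`. -/
def Mfun (r : ℕ) : ℕ∞ → ℕ∞
  | ⊤ => ⊤
  | (n : ℕ) => (((r + 1) * n - r : ℕ) : ℕ∞)

/-- `N(n) = M_1((6·ℓ^{3n−2} − 7)·(n−1) + 3n − 2)`. -/
def Nfun (ℓ : ℕ) : ℕ∞ → ℕ∞
  | ⊤ => ⊤
  | (n : ℕ) => Mfun 1 (((6 * ℓ ^ (3 * n - 2) - 7) * (n - 1) + 3 * n - 2 : ℕ) : ℕ∞)

/-- `R(n) = N(M_2(M_1(n)))`. -/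
def Rfun (ℓ : ℕ) (n : ℕ∞) : ℕ∞ :=
  Nfun ℓ (Mfun 2 (Mfun 1 n))

/-- The minimized inertia group `I_v^m` of a valuation (valuation subring) of `K`:
homomorphisms vanishing on the `v`-units. -/
def inertia (ℓ : ℕ) [Fact ℓ.Prime] (m : ℕ∞) (A : ValuationSubring K) : Set (gal ℓ m K) :=
  {σ | ∀ x : Kˣ, A.valuation (x : K) = 1 → galu σ x = 0}

/-- The minimized decomposition group `D_v^m` of a valuation (valuation subring) of `K`:
homomorphisms vanishing on the principal `v`-units `1 + 𝔪_v`. -/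
def decomp (ℓ : ℕ) [Fact ℓ.Prime] (m : ℕ∞) (A : ValuationSubring K) : Set (gal ℓ m K) :=
  {σ | ∀ x : Kˣ, A.valuation ((x : K) - 1) < 1 → galu σ x = 0}

/-- A subgroup of (the units of) a linearly ordered group-with-zero is convex. -/
def IsConvexSub {Γ : Type*} [LinearOrderedCommGroupWithZero Γ] (C : Subgroup Γˣ) : Prop :=
  ∀ γ c : Γˣ, (1 : Γ) ≤ (γ : Γ) → (γ : Γ) ≤ (c : Γ) → c ∈ C → γ ∈ C

/-- A subgroup is `ℓ`-divisible. -/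
def IsLDivisible {Γ : Type*} [LinearOrderedCommGroupWithZero Γ] (ℓ : ℕ) (C : Subgroup Γˣ) :
    Prop :=
  ∀ c ∈ C, ∃ d ∈ C, d ^ ℓ = c

/-- Condition (V1): the value group `vK` contains no nontrivial `ℓ`-divisible convex
subgroups. -/
def NoLDivConvex (ℓ : ℕ) (A : ValuationSubring K) : Prop :=
  ∀ C : Subgroup (A.ValueGroup)ˣ, IsConvexSub C → IsLDivisible ℓ C → C = ⊥

/-- The residue field `Kv` of a valuation. -/
abbrev resField (A : ValuationSubring K) : Type _ := IsLocalRing.ResidueField A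

/-- `τ ∈ 𝔤^m(Kv)` is the element induced by `σ ∈ D_v^m` (i.e. `τ = σ_v`): for every
`v`-unit `x` one has `τ(x̄) = σ(x)`. -/
def Induces {m : ℕ∞} (A : ValuationSubring K) (σ : gal ℓ m K)
    (τ : gal ℓ m (resField A)) : Prop :=
  ∀ (x : Kˣ) (h : A.valuation (x : K) = 1),
    galApp τ (IsLocalRing.residue A ⟨(x : K), (A.valuation_le_one_iff (x : K)).mp h.le⟩) =
      galu σ x

/-- An `m`-visible valuation. -/
def IsVisibleVal (ℓ : ℕ) [Fact ℓ.Prime] (m : ℕ∞) (A : ValuationSubring K) : Prop :=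
  NoLDivConvex ℓ A ∧
  ¬ IsCSet (Set.univ : Set (gal ℓ m (resField A))) ∧
  ∀ B : ValuationSubring (resField A),
    decomp ℓ m B = Set.univ → inertia ℓ m B = {0}

/-- `Σ^⊥ = ∩_{σ ∈ Σ} ker σ ⊆ Kˣ`. -/
def orth {m : ℕ∞} (S : Set (gal ℓ m K)) : Set Kˣ :=
  {x | ∀ σ ∈ S, galu σ x = 0}

/-- `σ` is valuative: `σ ∈ I_v^m` for some valuation `v` of `K`. -/
def IsValuative {m : ℕ∞} (σ : gal ℓ m K) : Prop :=
  ∃ A : ValuationSubring K, σ ∈ inertia ℓ m A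

/-- `V = v_σ` is the coarsest valuation with `σ ∈ I_V^m`. -/
def IsVsigma {m : ℕ∞} (σ : gal ℓ m K) (V : ValuationSubring K) : Prop :=
  σ ∈ inertia ℓ m V ∧ ∀ W : ValuationSubring K, σ ∈ inertia ℓ m W → W ≤ V

/-- `V = v_Σ` is the coarsest valuation with `Σ ⊆ I_V^m`. -/
def IsVSet {m : ℕ∞} (S : Set (gal ℓ m K)) (V : ValuationSubring K) : Prop :=
  S ⊆ inertia ℓ m V ∧ ∀ W : ValuationSubring K, S ⊆ inertia ℓ m W → W ≤ V

/-- The set `D^m_n(Σ)`. -/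
def Dmn (n m : ℕ∞) (S : Set (gal ℓ n K)) : Set (gal ℓ n K) :=
  {τ | ∀ σ ∈ S, ∃ τ₁ τ₂ : gal ℓ n K, ∃ σ' τ' τ₁' τ₂' : gal ℓ m K,
    galProj m n σ' = σ ∧ galProj m n τ' = τ ∧ galProj m n τ₁' = τ₁ ∧ galProj m n τ₂' = τ₂ ∧
    ¬ IsCPair τ₁ τ₂ ∧ IsCPair σ' τ' ∧ IsCPair σ' τ₁' ∧ IsCPair σ' τ₂'}

/-- The set `I^m_n(Σ)`. -/
def Imn (n m : ℕ∞) (S : Set (gal ℓ n K)) : Set (gal ℓ n K) :=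
  {σ | σ ∈ S ∧ ∃ σ' : gal ℓ m K, galProj m n σ' = σ ∧
    ∀ τ ∈ S, ∃ τ' : gal ℓ m K, galProj m n τ' = τ ∧ IsCPair σ' τ'}

/-- `K` is a function field over `k`, i.e. a finitely generated field extension. -/
def IsFunctionField (k K : Type*) [Field k] [Field K] [Algebra k K] : Prop :=
  ∃ s : Finset K, IntermediateField.adjoin k (s : Set K) = ⊤

/-- `trdeg(K|k) = d`. -/
def HasTrdeg (k K : Type*) [Field k] [Field K] [Algebra k K] (d : ℕ) : Prop :=
  ∃ b : Fin d → K, IsTranscendenceBasis k b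


/-- The set `ℓ^n·𝔤^m(K)` (interpreted as the trivial subgroup when `n = ∞`). -/
def lPowSet (ℓ : ℕ) [Fact ℓ.Prime] (m : ℕ∞) (K : Type*) [Field K] : ℕ∞ → Set (gal ℓ m K)
  | ⊤ => {0}
  | (k : ℕ) => {x | ∃ σ : gal ℓ m K, x = galSmul ((ℓ : Lam ℓ m) ^ k) σ}

end


section AuxLemmas

open Polynomial
open scoped DirectSum

/-- In a linearly ordered commutative group with zero, torsion elements are `1`. -/
lemma auxPowEqOne {Γ₀ : Type*} [LinearOrderedCommGroupWithZero Γ₀] {γ : Γ₀} {N : ℕ}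
    (hN : N ≠ 0) (h : γ ^ N = 1) : γ = 1 := by
  rcases lt_trichotomy γ 1 with hlt | he | hgt
  · have : γ ^ N < 1 := pow_lt_one₀ zero_le' hlt hN
    rw [h] at this; exact absurd this (lt_irrefl _)
  · exact he
  · have : 1 < γ ^ N := one_lt_pow₀ hgt hN
    rw [h] at this; exact absurd this (lt_irrefl _)

/-- Lifting along `π` for finitely generated abelian groups. -/
lemma auxFgLift {G Λ : Type*} [AddCommGroup G] [AddCommGroup Λ] {ℓ nn : ℕ} (hl : ℓ.Prime)
    (π : Λ →+ ZMod (ℓ ^ nn)) (hsurj : ∀ c, ∃ a, π a = c)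
    (τ : G →+ ZMod (ℓ ^ nn))
    (hstar : ∀ (k : ℕ) (x : G), ℓ ^ k • x = 0 → ∃ a, ℓ ^ k • a = 0 ∧ π a = τ x)
    [hfg : AddGroup.FG G] : ∃ σ : G →+ Λ, π.comp σ = τ := by
  classical
  obtain ⟨N, ι, hι, p, hp, e, ⟨φ⟩⟩ := AddCommGroup.equiv_free_prod_directSum_zmod G
  set τ' : ((Fin N →₀ ℤ) × ⨁ i : ι, ZMod (p i ^ e i)) →+ ZMod (ℓ ^ nn) :=
    τ.comp φ.symm.toAddMonoidHom with hτ'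
  choose aF haF using fun i : Fin N => hsurj (τ' (Finsupp.single i 1, 0))
  have haT : ∀ i : ι, ∃ a : Λ, (p i ^ e i) • a = 0 ∧
      π a = τ' (0, DirectSum.of (fun j => ZMod (p j ^ e j)) i 1) := by
    intro i
    have hz : (p i ^ e i) •
        ((0, DirectSum.of (fun j => ZMod (p j ^ e j)) i 1) :
          (Fin N →₀ ℤ) × ⨁ i : ι, ZMod (p i ^ e i)) = 0 := by
      have h1 : (p i ^ e i) • (DirectSum.of (fun j => ZMod (p j ^ e j)) i 1) =
          DirectSum.of (fun j => ZMod (p j ^ e j)) i ((p i ^ e i) • (1 : ZMod (p i ^ e i))) :=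
        (map_nsmul (DirectSum.of (fun j => ZMod (p j ^ e j)) i) _ _).symm
      have h2 : (p i ^ e i) • (1 : ZMod (p i ^ e i)) = 0 := by
        rw [nsmul_eq_mul, mul_one, ZMod.natCast_self]
      rw [Prod.smul_mk, smul_zero, h1, h2, map_zero]
      exact Prod.mk_zero_zero
    by_cases hpi : p i = ℓ
    · subst hpi
      have h0 : (p i) ^ (e i) •
          (φ.symm (0, DirectSum.of (fun j => ZMod (p j ^ e j)) i 1)) = 0 := by
        rw [← map_nsmul, hz, map_zero]
      obtain ⟨a, h1, h2⟩ := hstar (e i) _ h0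
      exact ⟨a, h1, h2⟩
    · refine ⟨0, smul_zero _, ?_⟩
      have hc : (p i ^ e i) • τ' (0, DirectSum.of (fun j => ZMod (p j ^ e j)) i 1) = 0 := by
        rw [← map_nsmul, hz, map_zero]
      have hco : Nat.Coprime (p i ^ e i) (ℓ ^ nn) :=
        ((Nat.coprime_primes (hp i) hl).mpr hpi).pow (e i) nn
      have hu : IsUnit ((p i ^ e i : ℕ) : ZMod (ℓ ^ nn)) :=
        ⟨ZMod.unitOfCoprime _ hco, ZMod.coe_unitOfCoprime _ hco⟩
      rw [nsmul_eq_mul] at hc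
      rw [map_zero, (hu.mul_right_eq_zero.mp hc).symm]
  choose aT haT1 haT2 using haT
  set σF : (Fin N →₀ ℤ) →+ Λ := Finsupp.liftAddHom fun i => zmultiplesHom Λ (aF i) with hσF
  set σT : (⨁ i : ι, ZMod (p i ^ e i)) →+ Λ :=
    DirectSum.toAddMonoid (fun i => ZMod.lift _ ⟨zmultiplesHom Λ (aT i), by
      show ((p i ^ e i : ℕ) : ℤ) • (aT i) = 0
      rw [natCast_zsmul]
      exact haT1 i⟩) with hσT
  refine ⟨(σF.coprod σT).comp φ.toAddMonoidHom, ?_⟩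
  have hfree : ∀ f, π (σF f) = τ' (f, 0) := by
    intro f
    induction f using Finsupp.induction_linear with
    | zero => simp; exact (map_zero τ').symm
    | add f g hf hg =>
        rw [map_add, map_add, hf, hg, ← map_add]
        congr 1
        rw [Prod.mk_add_mk, add_zero]
    | single i b =>
        have h1 : σF (Finsupp.single i b) = b • aF i := by
          rw [hσF, Finsupp.liftAddHom_apply_single, zmultiplesHom_apply]
        rw [h1, map_zsmul, haF, ← map_zsmul]
        congr 1
        rw [Prod.smul_mk, smul_zero, Finsupp.smul_single, smul_eq_mul, mul_one]
  have htor : ∀ d, π (σT d) = τ' (0, d) := by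
    intro d
    induction d using DirectSum.induction_on with
    | zero => simp; exact (map_zero τ').symm
    | add x y hx hy =>
        rw [map_add, map_add, hx, hy, ← map_add]
        congr 1
    | of i y =>
        obtain ⟨b, rfl⟩ := ZMod.intCast_surjective y
        have h1 : σT (DirectSum.of (fun j => ZMod (p j ^ e j)) i ((b : ℤ) : ZMod (p i ^ e i))) =
            b • aT i := by
          rw [hσT, DirectSum.toAddMonoid_of, ZMod.lift_coe, zmultiplesHom_apply]
        rw [h1, map_zsmul, haT2, ← map_zsmul]
        congr 1
        rw [Prod.smul_mk, smul_zero, ← map_zsmul (DirectSum.of (fun j => ZMod (p j ^ e j)) i),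
          zsmul_one]
  ext x
  show π ((σF.coprod σT) (φ x)) = τ x
  have hτx : τ x = τ' (φ x) := by
    rw [hτ']
    show τ x = τ (φ.symm (φ x))
    rw [AddEquiv.symm_apply_apply]
  rw [hτx]
  obtain ⟨f, d⟩ := φ x
  rw [AddMonoidHom.coprod_apply]
  show π (σF f + σT d) = _
  rw [map_add, hfree, htor, ← map_add]
  congr 1
  rw [Prod.mk_add_mk, add_zero, zero_add]

/-- Lifting along `π` for arbitrary abelian groups, by compactness. -/
lemma auxLift {G Λ : Type*} [AddCommGroup G] [AddCommGroup Λ]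
    [TopologicalSpace Λ] [CompactSpace Λ] [T2Space Λ] [IsTopologicalAddGroup Λ]
    {ℓ nn : ℕ} (hl : ℓ.Prime)
    (π : Λ →+ ZMod (ℓ ^ nn)) (hclosed : ∀ c, IsClosed {a | π a = c})
    (hsurj : ∀ c, ∃ a, π a = c)
    (τ : G →+ ZMod (ℓ ^ nn))
    (hstar : ∀ (k : ℕ) (x : G), ℓ ^ k • x = 0 → ∃ a, ℓ ^ k • a = 0 ∧ π a = τ x) :
    ∃ σ : G →+ Λ, π.comp σ = τ := by
  classical
  have fgcase : ∀ s : Finset G, ∃ σ : AddSubgroup.closure (s : Set G) →+ Λ,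
      π.comp σ = τ.comp (AddSubgroup.closure (s : Set G)).subtype := by
    intro s
    haveI : AddGroup.FG (AddSubgroup.closure (s : Set G)) := AddGroup.closure_finset_fg s
    refine auxFgLift hl π hsurj (τ.comp (AddSubgroup.closure (s : Set G)).subtype) ?_
    intro k x hx
    have hx' : ℓ ^ k • (x : G) = 0 := by
      have := congrArg (Subtype.val) hx
      simpa using this
    obtain ⟨a, h1, h2⟩ := hstar k (x : G) hx'
    exact ⟨a, h1, h2⟩
  set C : Finset G → Set (G → Λ) := fun s =>
    {f | (∀ x ∈ AddSubgroup.closure (s : Set G), ∀ y ∈ AddSubgroup.closure (s : Set G),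
        f (x + y) = f x + f y) ∧ ∀ x ∈ AddSubgroup.closure (s : Set G), π (f x) = τ x} with hC
  have hmono : ∀ {s t : Finset G}, s ⊆ t → C t ⊆ C s := by
    intro s t hst f hf
    have hcl : AddSubgroup.closure (s : Set G) ≤ AddSubgroup.closure (t : Set G) :=
      AddSubgroup.closure_mono (by exact_mod_cast hst)
    exact ⟨fun x hx y hy => hf.1 x (hcl hx) y (hcl hy), fun x hx => hf.2 x (hcl hx)⟩
  have hne : ∀ s, (C s).Nonempty := by
    intro s
    obtain ⟨σ, hσ⟩ := fgcase s
    refine ⟨fun x => if hx : x ∈ AddSubgroup.closure (s : Set G) then σ ⟨x, hx⟩ else 0, ?_, ?_⟩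
    · intro x hx y hy
      dsimp only
      rw [dif_pos hx, dif_pos hy, dif_pos (add_mem hx hy)]
      have h3 : (⟨x + y, add_mem hx hy⟩ : AddSubgroup.closure (s : Set G)) =
          ⟨x, hx⟩ + ⟨y, hy⟩ := rfl
      rw [h3, map_add]
    · intro x hx
      dsimp only
      rw [dif_pos hx]
      exact DFunLike.congr_fun hσ ⟨x, hx⟩
  have hcl : ∀ s, IsClosed (C s) := by
    intro s
    have h1 : IsClosed {f : G → Λ | ∀ x ∈ AddSubgroup.closure (s : Set G),
        ∀ y ∈ AddSubgroup.closure (s : Set G), f (x + y) = f x + f y} := by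
      have he : {f : G → Λ | ∀ x ∈ AddSubgroup.closure (s : Set G),
          ∀ y ∈ AddSubgroup.closure (s : Set G), f (x + y) = f x + f y} =
          ⋂ (x : G) (_ : x ∈ AddSubgroup.closure (s : Set G)) (y : G)
            (_ : y ∈ AddSubgroup.closure (s : Set G)), {f : G → Λ | f (x + y) = f x + f y} := by
        ext f; simp
      rw [he]
      exact isClosed_iInter fun x => isClosed_iInter fun _ => isClosed_iInter fun y =>
        isClosed_iInter fun _ => isClosed_eq (continuous_apply _)
          ((continuous_apply x).add (continuous_apply y))
    have h2 : IsClosed {f : G → Λ | ∀ x ∈ AddSubgroup.closure (s : Set G), π (f x) = τ x} := by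
      have he : {f : G → Λ | ∀ x ∈ AddSubgroup.closure (s : Set G), π (f x) = τ x} =
          ⋂ (x : G) (_ : x ∈ AddSubgroup.closure (s : Set G)),
            (fun f : G → Λ => f x) ⁻¹' {a | π a = τ x} := by
        ext f; simp
      rw [he]
      exact isClosed_iInter fun x => isClosed_iInter fun _ =>
        (hclosed (τ x)).preimage (continuous_apply x)
    exact h1.inter h2
  have hdir : Directed (· ⊇ ·) C := fun s t =>
    ⟨s ∪ t, hmono Finset.subset_union_left, hmono Finset.subset_union_right⟩
  obtain ⟨f, hf⟩ := IsCompact.nonempty_iInter_of_directed_nonempty_isCompact_isClosed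
    C hdir hne (fun s => (hcl s).isCompact) hcl
  have hfs : ∀ s : Finset G, f ∈ C s := fun s => Set.mem_iInter.mp hf s
  have hadd : ∀ x y : G, f (x + y) = f x + f y := by
    intro x y
    have h := hfs {x, y}
    have hx : x ∈ AddSubgroup.closure (({x, y} : Finset G) : Set G) :=
      AddSubgroup.subset_closure (by simp)
    have hy : y ∈ AddSubgroup.closure (({x, y} : Finset G) : Set G) :=
      AddSubgroup.subset_closure (by simp)
    exact h.1 x hx y hy
  refine ⟨AddMonoidHom.mk' f hadd, ?_⟩
  ext x
  exact (hfs {x}).2 x (AddSubgroup.subset_closure (by simp))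

variable {K : Type*} [Field K]

lemma auxValOne {A : ValuationSubring K} {u : K} (h : A.valuation (u - 1) < 1) :
    A.valuation u = 1 := by
  have h1 : A.valuation (u - 1) < A.valuation 1 := by rwa [Valuation.map_one]
  have h2 := Valuation.map_add_eq_of_lt_right A.valuation h1
  rwa [sub_add_cancel, Valuation.map_one] at h2

/-- The principal units as an additive subgroup of `Additive Kˣ`. -/
def pUnits (A : ValuationSubring K) : AddSubgroup (Additive Kˣ) where
  carrier := {x | A.valuation (((Additive.toMul x : Kˣ) : K) - 1) < 1}
  zero_mem' := by
    show A.valuation (((1 : Kˣ) : K) - 1) < 1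
    rw [Units.val_one, sub_self, Valuation.map_zero]
    exact zero_lt_one
  add_mem' := by
    intro a b ha hb
    show A.valuation (((Additive.toMul (a + b) : Kˣ) : K) - 1) < 1
    have hab : ((Additive.toMul (a + b) : Kˣ) : K) =
        ((Additive.toMul a : Kˣ) : K) * ((Additive.toMul b : Kˣ) : K) := rfl
    have ha' : A.valuation (((Additive.toMul a : Kˣ) : K) - 1) < 1 := ha
    have hb' : A.valuation (((Additive.toMul b : Kˣ) : K) - 1) < 1 := hb
    have hα : A.valuation ((Additive.toMul a : Kˣ) : K) = 1 := auxValOne ha'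
    have hsplit : ((Additive.toMul a : Kˣ) : K) * ((Additive.toMul b : Kˣ) : K) - 1 =
        ((Additive.toMul a : Kˣ) : K) * (((Additive.toMul b : Kˣ) : K) - 1) +
          (((Additive.toMul a : Kˣ) : K) - 1) := by ring
    rw [hab, hsplit]
    refine Valuation.map_add_lt A.valuation ?_ ha'
    rw [Valuation.map_mul, hα, one_mul]
    exact hb'
  neg_mem' := by
    intro a ha
    show A.valuation (((Additive.toMul (-a) : Kˣ) : K) - 1) < 1
    have hinv : ((Additive.toMul (-a) : Kˣ) : K) = ((Additive.toMul a : Kˣ) : K)⁻¹ := by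
      rw [toMul_neg]
      exact Units.val_inv_eq_inv_val _
    have ha' : A.valuation (((Additive.toMul a : Kˣ) : K) - 1) < 1 := ha
    have hα : A.valuation ((Additive.toMul a : Kˣ) : K) = 1 := auxValOne ha'
    have hα0 : ((Additive.toMul a : Kˣ) : K) ≠ 0 := Units.ne_zero _
    have hsplit : ((Additive.toMul a : Kˣ) : K)⁻¹ - 1 =
        (1 - ((Additive.toMul a : Kˣ) : K)) * ((Additive.toMul a : Kˣ) : K)⁻¹ := by
      field_simp
    rw [hinv, hsplit, Valuation.map_mul, map_inv₀, hα, inv_one, mul_one,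
      Valuation.map_sub_swap]
    exact ha'

/-- The units as an additive subgroup of `Additive Kˣ`. -/
def vUnits (A : ValuationSubring K) : AddSubgroup (Additive Kˣ) where
  carrier := {x | A.valuation ((Additive.toMul x : Kˣ) : K) = 1}
  zero_mem' := by
    show A.valuation ((1 : Kˣ) : K) = 1
    rw [Units.val_one, Valuation.map_one]
  add_mem' := by
    intro a b ha hb
    show A.valuation (((Additive.toMul a : Kˣ) : K) * ((Additive.toMul b : Kˣ) : K)) = 1
    have ha' : A.valuation ((Additive.toMul a : Kˣ) : K) = 1 := ha
    have hb' : A.valuation ((Additive.toMul b : Kˣ) : K) = 1 := hb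
    rw [Valuation.map_mul, ha', hb', one_mul]
  neg_mem' := by
    intro a ha
    show A.valuation ((Additive.toMul (-a) : Kˣ) : K) = 1
    have ha' : A.valuation ((Additive.toMul a : Kˣ) : K) = 1 := ha
    have hinv : ((Additive.toMul (-a) : Kˣ) : K) = ((Additive.toMul a : Kˣ) : K)⁻¹ := by
      rw [toMul_neg]
      exact Units.val_inv_eq_inv_val _
    rw [hinv, map_inv₀, ha', inv_one]

lemma auxSplitsDvd {a b : ℕ} (hab : a ∣ b) (hb : b ≠ 0)
    (h : Splits (X ^ b - 1 : K[X])) : Splits (X ^ a - 1 : K[X]) := by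
  have hne : (X ^ b - 1 : K[X]) ≠ 0 := by
    have hm := monic_X_pow_sub_C (1 : K) hb
    rw [map_one] at hm
    exact hm.ne_zero
  refine Splits.of_dvd h hne ?_
  obtain ⟨c, rfl⟩ := hab
  have hd := sub_dvd_pow_sub_pow (X ^ a : K[X]) 1 c
  rwa [one_pow, ← pow_mul] at hd

/-- If `x^N` is a principal unit and `X^N - 1` splits, some `N`-th root of unity is close to
`x`. -/
lemma auxCloseRoot (A : ValuationSubring K) {N : ℕ} (hN : N ≠ 0)
    (hsp : Splits (X ^ N - 1 : K[X])) (u : Kˣ)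
    (hu : A.valuation (((u : K)) ^ N - 1) < 1) :
    ∃ ζ : Kˣ, ((ζ : K)) ^ N = 1 ∧ A.valuation (((u * ζ⁻¹ : Kˣ) : K) - 1) < 1 := by
  have hmonic : (X ^ N - 1 : K[X]).Monic := by
    have hm := monic_X_pow_sub_C (1 : K) hN
    rwa [map_one] at hm
  have hroots := hsp.eq_prod_roots_of_monic hmonic
  have heval : (u : K) ^ N - 1 =
      ((X ^ N - 1 : K[X]).roots.map fun ρ => (u : K) - ρ).prod := by
    have h1 : (u : K) ^ N - 1 = eval (u : K) (X ^ N - 1 : K[X]) := by simp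
    rw [h1]
    conv_lhs => rw [hroots]
    rw [eval_multiset_prod, Multiset.map_map]
    congr 1
    refine Multiset.map_congr rfl ?_
    intro ρ _
    simp
  have hex : ∃ ρ ∈ (X ^ N - 1 : K[X]).roots, A.valuation ((u : K) - ρ) < 1 := by
    by_contra hcon
    push_neg at hcon
    have hge : (1 : A.ValueGroup) ≤ A.valuation ((u : K) ^ N - 1) := by
      rw [heval, map_multiset_prod]
      refine Multiset.one_le_prod ?_
      intro g hg
      rw [Multiset.map_map, Multiset.mem_map] at hg
      obtain ⟨ρ, hρ, rfl⟩ := hg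
      exact hcon ρ hρ
    exact absurd hu (not_lt.mpr hge)
  obtain ⟨ρ, hρmem, hρval⟩ := hex
  have hρroot : ρ ^ N = 1 := by
    have h3 : eval ρ (X ^ N - 1 : K[X]) = 0 := (mem_roots hmonic.ne_zero).mp hρmem
    simp only [eval_sub, eval_pow, eval_X, eval_one] at h3
    exact sub_eq_zero.mp h3
  have hρ0 : ρ ≠ 0 := by
    intro h
    rw [h, zero_pow hN] at hρroot
    exact zero_ne_one hρroot
  refine ⟨Units.mk0 ρ hρ0, hρroot, ?_⟩
  have hvρ : A.valuation ρ = 1 := by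
    refine auxPowEqOne hN ?_
    rw [← map_pow, hρroot, Valuation.map_one]
  have hcoe : ((u * (Units.mk0 ρ hρ0)⁻¹ : Kˣ) : K) - 1 = ((u : K) - ρ) * ρ⁻¹ := by
    rw [Units.val_mul]
    simp only [Units.val_inv_eq_inv_val, Units.val_mk0]
    field_simp
  rw [hcoe, Valuation.map_mul, map_inv₀, hvρ, inv_one, mul_one]
  exact hρval

/-- Any `ℓ^k`-th root of unity is an `ℓ^(M-k)`-th power, provided `X^(ℓ^M) - 1` splits. -/
lemma auxRootPow {ℓ : ℕ} (hl : ℓ.Prime) {k M : ℕ} (hkM : k ≤ M)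
    (hsp : Splits (X ^ (ℓ ^ M) - 1 : K[X])) {ζ : K} (hζ : ζ ^ (ℓ ^ k) = 1) :
    ∃ ξ : K, ξ ^ (ℓ ^ (M - k)) = ζ := by
  by_cases hc : (ℓ : K) = 0
  · have hchar : CharP K ℓ := by
      have hdvd : ringChar K ∣ ℓ := ringChar.dvd hc
      rcases (Nat.Prime.eq_one_or_self_of_dvd hl _ hdvd) with h1 | h1
      · exact absurd h1 (CharP.ringChar_ne_one (R := K))
      · exact h1 ▸ ringChar.charP K
    haveI := hchar
    haveI : Fact ℓ.Prime := ⟨hl⟩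
    have hζ1 : ζ = 1 := by
      have h1 : (ζ - 1) ^ ℓ ^ k = ζ ^ ℓ ^ k - 1 ^ ℓ ^ k := sub_pow_char_pow (R := K) (p := ℓ) (n := k) (x := ζ) (y := 1)
      rw [hζ, one_pow, sub_self] at h1
      have h2 := pow_eq_zero_iff (pow_ne_zero k hl.ne_zero) |>.mp h1
      exact sub_eq_zero.mp h2
    exact ⟨1, by rw [one_pow, hζ1]⟩
  · haveI : NeZero ((ℓ ^ M : ℕ) : K) := by
      refine ⟨?_⟩
      rw [Nat.cast_pow]
      exact pow_ne_zero _ hc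
    haveI : NeZero (ℓ ^ M) := ⟨pow_ne_zero _ hl.ne_zero⟩
    have hcyc : (cyclotomic (ℓ ^ M) K) ∣ (X ^ (ℓ ^ M) - 1 : K[X]) :=
      cyclotomic.dvd_X_pow_sub_one (ℓ ^ M) K
    have hne : (X ^ (ℓ ^ M) - 1 : K[X]) ≠ 0 := by
      have hm := monic_X_pow_sub_C (1 : K) (pow_ne_zero M hl.ne_zero)
      rw [map_one] at hm
      exact hm.ne_zero
    have hspc : Splits (cyclotomic (ℓ ^ M) K) :=
      Splits.of_dvd hsp hne hcyc
    have hdeg : (cyclotomic (ℓ ^ M) K).degree ≠ 0 := by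
      rw [degree_cyclotomic]
      exact_mod_cast (Nat.totient_pos.mpr (pow_pos hl.pos M)).ne'
    obtain ⟨ξp, hξp⟩ := hspc.exists_eval_eq_zero hdeg
    have hprim : IsPrimitiveRoot ξp (ℓ ^ M) := by
      rw [← isRoot_cyclotomic_iff (R := K)]
      exact hξp
    have hζM : ζ ^ (ℓ ^ M) = 1 := by
      have hMk : ℓ ^ M = ℓ ^ k * ℓ ^ (M - k) := by
        rw [← pow_add]
        congr 1
        omega
      rw [hMk, pow_mul, hζ, one_pow]
    obtain ⟨i, hiN, hiζ⟩ := hprim.eq_pow_of_pow_eq_one hζM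
    have hdvd : ℓ ^ M ∣ i * ℓ ^ k := by
      rw [← hprim.pow_eq_one_iff_dvd, pow_mul, hiζ, hζ]
    have hdvd2 : ℓ ^ (M - k) ∣ i := by
      have h1 : ℓ ^ (M - k) * ℓ ^ k ∣ i * ℓ ^ k := by
        rwa [← pow_add, Nat.sub_add_cancel hkM]
      exact (Nat.mul_dvd_mul_iff_right (pow_pos hl.pos k)).mp h1
    obtain ⟨j, hj⟩ := hdvd2
    refine ⟨ξp ^ j, ?_⟩
    rw [← pow_mul, mul_comm, ← hj, hiζ]

/-- The main step for the decomposition group: modulo principal units, an element of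
`ℓ^k`-torsion is an `ℓ^(M-k)`-th power. -/
lemma auxDecompStar (A : ValuationSubring K) {ℓ : ℕ} (hl : ℓ.Prime) {k M : ℕ} (hkM : k ≤ M)
    (hspM : Splits (X ^ (ℓ ^ M) - 1 : K[X]))
    (x : Additive Kˣ) (hx : ℓ ^ k • x ∈ pUnits A) :
    ∃ ξ : Kˣ, x - Additive.ofMul (ξ ^ ℓ ^ (M - k)) ∈ pUnits A := by
  have hspk : Splits (X ^ (ℓ ^ k) - 1 : K[X]) :=
    auxSplitsDvd (pow_dvd_pow ℓ hkM) (pow_ne_zero M hl.ne_zero) hspM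
  have hx' : A.valuation (((Additive.toMul x : Kˣ) : K) ^ (ℓ ^ k) - 1) < 1 := by
    have h1 : A.valuation (((Additive.toMul (ℓ ^ k • x) : Kˣ) : K) - 1) < 1 := hx
    rw [toMul_nsmul, Units.val_pow_eq_pow_val] at h1
    exact h1
  obtain ⟨ζ, hζ1, hζ2⟩ := auxCloseRoot A (pow_ne_zero k hl.ne_zero) hspk (Additive.toMul x) hx'
  obtain ⟨ξ0, hξ0⟩ := auxRootPow hl hkM hspM (ζ := ((ζ : Kˣ) : K)) hζ1
  have hξne : ξ0 ≠ 0 := by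
    intro h
    rw [h, zero_pow (pow_ne_zero _ hl.ne_zero)] at hξ0
    exact (Units.ne_zero ζ) hξ0.symm
  refine ⟨Units.mk0 ξ0 hξne, ?_⟩
  have hunit : (Units.mk0 ξ0 hξne) ^ (ℓ ^ (M - k)) = ζ := by
    ext
    rw [Units.val_pow_eq_pow_val, Units.val_mk0]
    exact hξ0
  show A.valuation
    (((Additive.toMul (x - Additive.ofMul ((Units.mk0 ξ0 hξne) ^ ℓ ^ (M - k))) : Kˣ) : K) - 1) < 1
  rw [hunit]
  have htm : (Additive.toMul (x - Additive.ofMul ζ) : Kˣ) = Additive.toMul x * ζ⁻¹ := by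
    rw [toMul_sub]
    rfl
  rw [htm]
  exact hζ2

/-- Quotient plumbing: the lifting result for homomorphisms vanishing on a subgroup. -/
lemma auxMainHelper {ℓ nn : ℕ} (hl : ℓ.Prime)
    {Λ : Type*} [AddCommGroup Λ] [TopologicalSpace Λ] [CompactSpace Λ] [T2Space Λ]
    [IsTopologicalAddGroup Λ]
    (π : Λ →+ ZMod (ℓ ^ nn)) (hclosed : ∀ c, IsClosed {a | π a = c})
    (hsurj : ∀ c, ∃ a, π a = c)
    (H : AddSubgroup (Additive Kˣ))
    (τ : Additive Kˣ →+ ZMod (ℓ ^ nn)) (hτ : ∀ x ∈ H, τ x = 0)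
    (hstar : ∀ (k : ℕ) (x : Additive Kˣ), ℓ ^ k • x ∈ H →
      ∃ a : Λ, ℓ ^ k • a = 0 ∧ π a = τ x) :
    ∃ σ : Additive Kˣ →+ Λ, (∀ x ∈ H, σ x = 0) ∧ π.comp σ = τ := by
  have hker : H ≤ τ.ker := fun x hx => hτ x hx
  set τq : (Additive Kˣ) ⧸ H →+ ZMod (ℓ ^ nn) := QuotientAddGroup.lift H τ hker with hτq
  have hstarq : ∀ (k : ℕ) (q : (Additive Kˣ) ⧸ H), ℓ ^ k • q = 0 →
      ∃ a : Λ, ℓ ^ k • a = 0 ∧ π a = τq q := by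
    intro k q hq
    obtain ⟨x, rfl⟩ := QuotientAddGroup.mk'_surjective H q
    have hmem : ℓ ^ k • x ∈ H := by
      rw [← QuotientAddGroup.eq_zero_iff]
      rw [← map_nsmul (QuotientAddGroup.mk' H)] at hq
      exact hq
    obtain ⟨a, h1, h2⟩ := hstar k x hmem
    exact ⟨a, h1, by rw [h2]; exact (QuotientAddGroup.lift_mk' H hker x).symm⟩
  obtain ⟨σq, hσq⟩ := auxLift (G := (Additive Kˣ) ⧸ H) hl π hclosed hsurj τq hstarq
  refine ⟨σq.comp (QuotientAddGroup.mk' H), ?_, ?_⟩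
  · intro x hx
    have hx0 : (QuotientAddGroup.mk' H) x = 0 := by
      rw [QuotientAddGroup.mk'_apply, QuotientAddGroup.eq_zero_iff]
      exact hx
    show σq ((QuotientAddGroup.mk' H) x) = 0
    rw [hx0, map_zero]
  · ext x
    show π (σq ((QuotientAddGroup.mk' H) x)) = τ x
    have h1 : π (σq ((QuotientAddGroup.mk' H) x)) = τq ((QuotientAddGroup.mk' H) x) :=
      DFunLike.congr_fun hσq ((QuotientAddGroup.mk' H) x)
    rw [h1]
    exact QuotientAddGroup.lift_mk' H hker x

/-- The finite-level helper, with topology instances supplied. -/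
lemma auxHelperFin {ℓ mm nn : ℕ} (hl : ℓ.Prime) (hd : ℓ ^ nn ∣ ℓ ^ mm)
    (H : AddSubgroup (Additive Kˣ))
    (τ : Additive Kˣ →+ ZMod (ℓ ^ nn)) (hτ : ∀ x ∈ H, τ x = 0)
    (hstar : ∀ (k : ℕ) (x : Additive Kˣ), ℓ ^ k • x ∈ H →
      ∃ a : ZMod (ℓ ^ mm), ℓ ^ k • a = 0 ∧
        (ZMod.castHom hd (ZMod (ℓ ^ nn))).toAddMonoidHom a = τ x) :
    ∃ σ : Additive Kˣ →+ ZMod (ℓ ^ mm), (∀ x ∈ H, σ x = 0) ∧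
      ((ZMod.castHom hd (ZMod (ℓ ^ nn))).toAddMonoidHom).comp σ = τ := by
  haveI : NeZero (ℓ ^ mm) := ⟨pow_ne_zero _ hl.ne_zero⟩
  haveI : NeZero (ℓ ^ nn) := ⟨pow_ne_zero _ hl.ne_zero⟩
  letI : TopologicalSpace (ZMod (ℓ ^ mm)) := ⊥
  haveI : DiscreteTopology (ZMod (ℓ ^ mm)) := ⟨rfl⟩
  haveI : ContinuousAdd (ZMod (ℓ ^ mm)) := ⟨continuous_of_discreteTopology⟩
  haveI : ContinuousNeg (ZMod (ℓ ^ mm)) := ⟨continuous_of_discreteTopology⟩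
  haveI : IsTopologicalAddGroup (ZMod (ℓ ^ mm)) := ⟨⟩
  refine auxMainHelper hl _ (fun c => isClosed_discrete _) ?_ H τ hτ hstar
  intro c
  refine ⟨((c.val : ℕ) : ZMod (ℓ ^ mm)), ?_⟩
  show (ZMod.castHom hd (ZMod (ℓ ^ nn))) ((c.val : ℕ) : ZMod (ℓ ^ mm)) = c
  rw [map_natCast]
  exact ZMod.natCast_rightInverse c

/-- The infinite-level helper, with topology instances supplied. -/
lemma auxHelperTop (ℓ : ℕ) [Fact ℓ.Prime] {nn : ℕ}
    (H : AddSubgroup (Additive Kˣ))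
    (τ : Additive Kˣ →+ ZMod (ℓ ^ nn)) (hτ : ∀ x ∈ H, τ x = 0)
    (hstar : ∀ (k : ℕ) (x : Additive Kˣ), ℓ ^ k • x ∈ H →
      ∃ a : PadicInt ℓ, ℓ ^ k • a = 0 ∧
        (PadicInt.toZModPow nn).toAddMonoidHom a = τ x) :
    ∃ σ : Additive Kˣ →+ PadicInt ℓ, (∀ x ∈ H, σ x = 0) ∧
      ((PadicInt.toZModPow nn).toAddMonoidHom).comp σ = τ := by
  have hl : ℓ.Prime := Fact.out
  haveI : NeZero (ℓ ^ nn) := ⟨pow_ne_zero _ hl.ne_zero⟩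
  have hsurj : ∀ c, ∃ a : PadicInt ℓ, (PadicInt.toZModPow nn).toAddMonoidHom a = c := by
    intro c
    refine ⟨((c.val : ℕ) : PadicInt ℓ), ?_⟩
    show (PadicInt.toZModPow nn) ((c.val : ℕ) : PadicInt ℓ) = c
    rw [map_natCast]
    exact ZMod.natCast_rightInverse c
  refine auxMainHelper hl _ ?_ hsurj H τ hτ hstar
  intro c
  obtain ⟨a0, ha0⟩ := hsurj c
  have he : {a : PadicInt ℓ | (PadicInt.toZModPow nn).toAddMonoidHom a = c} =
      (fun a : PadicInt ℓ => a - a0) ⁻¹' {x : PadicInt ℓ | ‖x‖ ≤ (ℓ : ℝ) ^ (-(nn : ℤ))} := by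
    ext a
    simp only [Set.mem_setOf_eq, Set.mem_preimage]
    rw [PadicInt.norm_le_pow_iff_mem_span_pow, ← PadicInt.ker_toZModPow, RingHom.mem_ker,
      map_sub, sub_eq_zero]
    show PadicInt.toZModPow nn a = c ↔ _
    rw [show (PadicInt.toZModPow nn) a0 = c from ha0]
  rw [he]
  exact IsClosed.preimage (continuous_id.sub continuous_const)
    (isClosed_le continuous_norm continuous_const)

end AuxLemmas


/-- The canonical maps `D_v^m → D_v^n` and `I_v^m → I_v^n` are well defined and
surjective. -/
theorem stmt10 (ℓ : ℕ) [Fact ℓ.Prime] (m n : ℕ∞) (hn : 1 ≤ n) (hnm : n ≤ m)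
    (K : Type*) [Field K] (hμ : MuIn K 1 ℓ m) (A : ValuationSubring K) :
    (∀ σ ∈ decomp ℓ m A, galProj m n σ ∈ decomp ℓ n A) ∧
    (∀ σ ∈ inertia ℓ m A, galProj m n σ ∈ inertia ℓ n A) ∧
    (∀ τ ∈ decomp ℓ n A, ∃ σ ∈ decomp ℓ m A, galProj m n σ = τ) ∧
    (∀ τ ∈ inertia ℓ n A, ∃ σ ∈ inertia ℓ m A, galProj m n σ = τ) := by
  classical
  have hl : ℓ.Prime := Fact.out
  refine ⟨?_, ?_, ?_, ?_⟩
  · intro σ hσ x hx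
    have h0 : σ (Additive.ofMul x) = 0 := hσ x hx
    show (LamProj ℓ m n) (σ (Additive.ofMul x)) = 0
    rw [h0, map_zero]
  · intro σ hσ x hx
    have h0 : σ (Additive.ofMul x) = 0 := hσ x hx
    show (LamProj ℓ m n) (σ (Additive.ofMul x)) = 0
    rw [h0, map_zero]
  · -- decomposition surjectivity
    intro τ hτ
    cases n with
    | top =>
        have hm : m = ⊤ := top_le_iff.mp hnm
        subst hm
        exact ⟨τ, hτ, AddMonoidHom.id_comp τ⟩
    | coe nn =>
        have hτ' : ∀ x ∈ pUnits A, τ x = 0 := fun x hx => hτ (Additive.toMul x) hx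
        cases m with
        | top =>
            have hsp : ∀ j : ℕ, Polynomial.Splits
                (Polynomial.X ^ (ℓ ^ j) - 1 : K[X]) := by
              intro j
              have h : Polynomial.Splits
                  (Polynomial.X ^ (1 * ℓ ^ j) - 1 : K[X]) := hμ j
              rwa [one_mul] at h
            have hstar : ∀ (k : ℕ) (x : Additive Kˣ), ℓ ^ k • x ∈ pUnits A →
                ∃ a : PadicInt ℓ, ℓ ^ k • a = 0 ∧
                  (PadicInt.toZModPow nn).toAddMonoidHom a = τ x := by
              intro k x hx
              obtain ⟨ξ, hξ⟩ := auxDecompStar A hl (Nat.le_add_right k nn) (hsp (k + nn)) x hx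
              refine ⟨0, smul_zero _, ?_⟩
              have h1 : τ x = τ (Additive.ofMul (ξ ^ ℓ ^ (k + nn - k))) := by
                have h2 := hτ' _ hξ
                rw [map_sub, sub_eq_zero] at h2
                exact h2
              rw [map_zero, h1, ofMul_pow, map_nsmul]
              rw [show k + nn - k = nn from by omega]
              rw [nsmul_eq_mul, show ((ℓ ^ nn : ℕ) : Lam ℓ (nn : ℕ∞)) = 0 from
                ZMod.natCast_self _, zero_mul]; rfl
            obtain ⟨σ, hσ0, hσπ⟩ := auxHelperTop ℓ (pUnits A) τ hτ' hstar
            exact ⟨σ, fun x hx => hσ0 (Additive.ofMul x) hx, hσπ⟩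
        | coe mm =>
            have hnm' : nn ≤ mm := by exact_mod_cast hnm
            have hd : ℓ ^ nn ∣ ℓ ^ mm := pow_dvd_pow ℓ hnm'
            have hsp : Polynomial.Splits
                (Polynomial.X ^ (ℓ ^ mm) - 1 : K[X]) := by
              have h : Polynomial.Splits
                  (Polynomial.X ^ (1 * ℓ ^ mm) - 1 : K[X]) := hμ
              rwa [one_mul] at h
            have hstar : ∀ (k : ℕ) (x : Additive Kˣ), ℓ ^ k • x ∈ pUnits A →
                ∃ a : ZMod (ℓ ^ mm), ℓ ^ k • a = 0 ∧
                  (ZMod.castHom hd (ZMod (ℓ ^ nn))).toAddMonoidHom a = τ x := by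
              intro k x hx
              by_cases hk : k ≤ mm
              · obtain ⟨ξ, hξ⟩ := auxDecompStar A hl hk hsp x hx
                have h1 : τ x = (ℓ ^ (mm - k)) • τ (Additive.ofMul ξ) := by
                  have h2 := hτ' _ hξ
                  rw [map_sub, sub_eq_zero] at h2
                  rw [h2, ofMul_pow, map_nsmul]
                obtain ⟨b, hb⟩ : ∃ b : ZMod (ℓ ^ mm),
                    (ZMod.castHom hd (ZMod (ℓ ^ nn))) b = τ (Additive.ofMul ξ) := by
                  refine ⟨(((τ (Additive.ofMul ξ)).val : ℕ) : ZMod (ℓ ^ mm)), ?_⟩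
                  haveI : NeZero (ℓ ^ nn) := ⟨pow_ne_zero _ hl.ne_zero⟩
                  rw [map_natCast]
                  exact ZMod.natCast_rightInverse _
                refine ⟨ℓ ^ (mm - k) • b, ?_, ?_⟩
                · rw [smul_smul, show ℓ ^ k * ℓ ^ (mm - k) = ℓ ^ mm from by
                    rw [← pow_add]; congr 1; omega]
                  rw [nsmul_eq_mul, show ((ℓ ^ mm : ℕ) : ZMod (ℓ ^ mm)) = 0 from
                    ZMod.natCast_self _, zero_mul]
                · show (ZMod.castHom hd (ZMod (ℓ ^ nn))) (ℓ ^ (mm - k) • b) = τ x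
                  rw [map_nsmul, hb, h1]; rfl
              · push_neg at hk
                haveI : NeZero (ℓ ^ nn) := ⟨pow_ne_zero _ hl.ne_zero⟩
                refine ⟨(((τ x).val : ℕ) : ZMod (ℓ ^ mm)), ?_, ?_⟩
                · rw [nsmul_eq_mul, show ((ℓ ^ k : ℕ) : ZMod (ℓ ^ mm)) = 0 from
                    (ZMod.natCast_eq_zero_iff _ _).mpr (pow_dvd_pow ℓ hk.le),
                    zero_mul]
                · show (ZMod.castHom hd (ZMod (ℓ ^ nn))) (((τ x).val : ℕ) : ZMod (ℓ ^ mm)) = τ x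
                  rw [map_natCast]
                  exact ZMod.natCast_rightInverse _
            obtain ⟨σ, hσ0, hσπ⟩ := auxHelperFin hl hd (pUnits A) τ hτ' hstar
            refine ⟨σ, fun x hx => hσ0 (Additive.ofMul x) hx, ?_⟩
            show (LamProj ℓ (mm : ℕ∞) (nn : ℕ∞)).comp σ = τ
            rw [show LamProj ℓ (mm : ℕ∞) (nn : ℕ∞) =
              (ZMod.castHom hd (ZMod (ℓ ^ nn))).toAddMonoidHom from dif_pos hd]
            exact hσπ
  · -- inertia surjectivity
    intro τ hτ
    cases n with
    | top =>
        have hm : m = ⊤ := top_le_iff.mp hnm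
        subst hm
        exact ⟨τ, hτ, AddMonoidHom.id_comp τ⟩
    | coe nn =>
        have hτ' : ∀ x ∈ vUnits A, τ x = 0 := fun x hx => hτ (Additive.toMul x) hx
        have hstarI : ∀ (k : ℕ) (x : Additive Kˣ), ℓ ^ k • x ∈ vUnits A → x ∈ vUnits A := by
          intro k x hx
          have h1 : A.valuation ((Additive.toMul (ℓ ^ k • x) : Kˣ) : K) = 1 := hx
          rw [toMul_nsmul, Units.val_pow_eq_pow_val, map_pow] at h1
          exact auxPowEqOne (pow_ne_zero k hl.ne_zero) h1
        cases m with
        | top =>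
            have hstar : ∀ (k : ℕ) (x : Additive Kˣ), ℓ ^ k • x ∈ vUnits A →
                ∃ a : PadicInt ℓ, ℓ ^ k • a = 0 ∧
                  (PadicInt.toZModPow nn).toAddMonoidHom a = τ x := by
              intro k x hx
              exact ⟨0, smul_zero _, by rw [map_zero, hτ' x (hstarI k x hx)]; rfl⟩
            obtain ⟨σ, hσ0, hσπ⟩ := auxHelperTop ℓ (vUnits A) τ hτ' hstar
            exact ⟨σ, fun x hx => hσ0 (Additive.ofMul x) hx, hσπ⟩
        | coe mm =>
            have hnm' : nn ≤ mm := by exact_mod_cast hnm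
            have hd : ℓ ^ nn ∣ ℓ ^ mm := pow_dvd_pow ℓ hnm'
            have hstar : ∀ (k : ℕ) (x : Additive Kˣ), ℓ ^ k • x ∈ vUnits A →
                ∃ a : ZMod (ℓ ^ mm), ℓ ^ k • a = 0 ∧
                  (ZMod.castHom hd (ZMod (ℓ ^ nn))).toAddMonoidHom a = τ x := by
              intro k x hx
              exact ⟨0, smul_zero _, by rw [map_zero, hτ' x (hstarI k x hx)]; rfl⟩
            obtain ⟨σ, hσ0, hσπ⟩ := auxHelperFin hl hd (vUnits A) τ hτ' hstar
            refine ⟨σ, fun x hx => hσ0 (Additive.ofMul x) hx, ?_⟩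
            show (LamProj ℓ (mm : ℕ∞) (nn : ℕ∞)).comp σ = τ
            rw [show LamProj ℓ (mm : ℕ∞) (nn : ℕ∞) =
              (ZMod.castHom hd (ZMod (ℓ ^ nn))).toAddMonoidHom from dif_pos hd]
            exact hσπ
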